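/- Let Δ be a complete simplicial multi-fan of dimension n. The numbers h_q(Δ) (defined via a generic vector v by h_q(Δ) = Σ_{μ(I)=q} w(I) where μ(I) counts positive coefficients in the expansion of v in the basis {v_i : i∈I}) are independent of the choice of the generic vector v. -/

import Mathlib

open Finset

/-- The pairing between a covector and a vector in `ℝⁿ`. -/
def dotp {n : ℕ} (x y : Fin n → ℝ) : ℝ := ∑ k, x k * y k

/-- A (simplicial) multi-fan of dimension `n` with rays indexed by `{1,…,d}`:
an augmented simplicial set `S`, ray vectors `v i` spanning the simplicial cones
`C(I) = pos span {v i : i ∈ I}`, and a weight `w` on simplices (the difference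
`w = w⁺ − w⁻` of the two weight functions, restricted to top simplices is what matters). -/
structure MultiFan (n d : ℕ) where
  S : Finset (Finset (Fin d))
  empty_mem : ∅ ∈ S
  downClosed : ∀ I ∈ S, ∀ J ⊆ I, J ∈ S
  card_le : ∀ I ∈ S, I.card ≤ n
  v : Fin d → (Fin n → ℝ)
  indep : ∀ I ∈ S, LinearIndependent ℝ (fun i : {x // x ∈ I} => v i.1)
  w : Finset (Fin d) → ℤ

namespace MultiFan

variable {n d : ℕ}

/-- `x` is generic for the projected multi-fan `Δ_K`: it avoids every linear subspace
spanned by a cone (containing `C(K)`) of dimension `< n`. -/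
def GenericFor (Δ : MultiFan n d) (K : Finset (Fin d)) (x : Fin n → ℝ) : Prop :=
  ∀ L ∈ Δ.S, K ⊆ L → L.card < n → x ∉ Submodule.span ℝ (Δ.v '' (L : Set (Fin d)))

def Generic (Δ : MultiFan n d) (x : Fin n → ℝ) : Prop := Δ.GenericFor ∅ x

/-- `x` lies (mod the span of `C(K)`) in the projected cone `C_K(I)`. -/
def InProjCone (Δ : MultiFan n d) (K I : Finset (Fin d)) (x : Fin n → ℝ) : Prop :=
  ∃ a : Fin d → ℝ, (∀ j ∈ I \ K, 0 ≤ a j) ∧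
    (x - ∑ j ∈ I \ K, a j • Δ.v j) ∈ Submodule.span ℝ (Δ.v '' (K : Set (Fin d)))

open scoped Classical in
/-- `d_x` for the projected multi-fan `Δ_K`: the sum of the weights of top cones whose
projection contains the projection of `x`. -/
noncomputable def dv (Δ : MultiFan n d) (K : Finset (Fin d)) (x : Fin n → ℝ) : ℤ :=
  ∑ I ∈ Δ.S.filter (fun I => I.card = n ∧ K ⊆ I ∧ Δ.InProjCone K I x), Δ.w I

/-- Pre-completeness of the projected multi-fan `Δ_K`. -/
def PreCompleteAt (Δ : MultiFan n d) (K : Finset (Fin d)) : Prop :=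
  (∃ I ∈ Δ.S, K ⊆ I ∧ I.card = n) ∧
  ∀ x y : Fin n → ℝ, Δ.GenericFor K x → Δ.GenericFor K y → Δ.dv K x = Δ.dv K y

/-- Completeness: every projected multi-fan is pre-complete. -/
def Complete (Δ : MultiFan n d) : Prop := ∀ K ∈ Δ.S, Δ.PreCompleteAt K

open scoped Classical in
/-- The Duistermaat–Heckman function of the simple multi-polytope `(Δ, {F_i})`, where
`F_i = {u : ⟨u, v i⟩ = c i}`, the data `uu I i = u_i^I` is the dual basis of `{v i : i ∈ I}`
and `ξ ∈ V` is a generic vector.  For `I ∈ Σ^{(n)}` the coefficient of `u − u_I` on `u_i^I`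
is `⟨u, v i⟩ − c i`, so membership in the cone `C^*(I)^+` is expressed by the conditions below. -/
noncomputable def DH (Δ : MultiFan n d) (c : Fin d → ℝ)
    (uu : Finset (Fin d) → Fin d → (Fin n → ℝ)) (ξ : Fin n → ℝ) (u : Fin n → ℝ) : ℤ :=
  ∑ I ∈ Δ.S.filter (fun I => I.card = n),
    if (∀ i ∈ I, (0 < dotp (uu I i) ξ ∧ c i ≤ dotp u (Δ.v i)) ∨
                 (dotp (uu I i) ξ < 0 ∧ dotp u (Δ.v i) ≤ c i))
    then (-1 : ℤ) ^ (I.filter fun i => 0 < dotp (uu I i) ξ).card * Δ.w I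
    else 0

/-- `uu I i = u_i^I` is the basis dual to `{v i : i ∈ I}` for each top simplex `I`. -/
def DualBasis (Δ : MultiFan n d) (uu : Finset (Fin d) → Fin d → (Fin n → ℝ)) : Prop :=
  ∀ I ∈ Δ.S, I.card = n → ∀ i ∈ I, ∀ j ∈ I,
    dotp (uu I i) (Δ.v j) = if i = j then 1 else 0

/-- Genericity of `ξ` needed for the DH function: `⟨u_i^I, ξ⟩ ≠ 0` for all `I, i`. -/
def GenericDual (Δ : MultiFan n d) (uu : Finset (Fin d) → Fin d → (Fin n → ℝ))
    (ξ : Fin n → ℝ) : Prop :=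
  ∀ I ∈ Δ.S, I.card = n → ∀ i ∈ I, dotp (uu I i) ξ ≠ 0

end MultiFan

section Aux

open scoped Classical

variable {n d : ℕ}

namespace MultiFan

lemma sum_rep_mem_span (Δ : MultiFan n d) (K : Finset (Fin d)) (c : Fin d → ℝ) :
    (∑ k ∈ K, c k • Δ.v k) ∈ Submodule.span ℝ (Δ.v '' (K : Set (Fin d))) :=
  Submodule.sum_mem _ fun k hk => Submodule.smul_mem _ _
    (Submodule.subset_span ⟨k, hk, rfl⟩)

lemma coeff_eq_zero (Δ : MultiFan n d) {I : Finset (Fin d)} (hI : I ∈ Δ.S)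
    {g : Fin d → ℝ} (hg : ∑ i ∈ I, g i • Δ.v i = 0) : ∀ i ∈ I, g i = 0 := by
  have h := linearIndependent_iff'.1 (Δ.indep I hI)
  intro i hi
  have := h Finset.univ (fun j => g j.1) ?_ ⟨i, hi⟩ (Finset.mem_univ _)
  · exact this
  · rw [← hg]
    rw [← Finset.sum_attach I (fun i => g i • Δ.v i)]
    rfl

lemma coeff_unique (Δ : MultiFan n d) {I : Finset (Fin d)} (hI : I ∈ Δ.S)
    {g h : Fin d → ℝ} (hgh : ∑ i ∈ I, g i • Δ.v i = ∑ i ∈ I, h i • Δ.v i) :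
    ∀ i ∈ I, g i = h i := by
  intro i hi
  have := Δ.coeff_eq_zero hI (g := fun i => g i - h i) ?_ i hi
  · exact sub_eq_zero.1 this
  · simp only [sub_smul, Finset.sum_sub_distrib, hgh, sub_self]

lemma rep_of_mem_span (Δ : MultiFan n d) {K I : Finset (Fin d)} (hI : I ∈ Δ.S)
    (hKI : K ⊆ I) {z : Fin n → ℝ}
    (hz : z ∈ Submodule.span ℝ (Δ.v '' (K : Set (Fin d)))) :
    ∃ e : Fin d → ℝ, z = ∑ k ∈ K, e k • Δ.v k := by
  rw [← Finset.coe_image] at hz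
  obtain ⟨f, -, hf⟩ := Submodule.mem_span_finset.1 hz
  refine ⟨fun k => f (Δ.v k), ?_⟩
  rw [← hf, Finset.sum_image ?_]
  · intro k1 h1 k2 h2 hv
    have h12 : (⟨k1, hKI h1⟩ : {x // x ∈ I}) = ⟨k2, hKI h2⟩ :=
      (Δ.indep I hI).injective hv
    exact congrArg Subtype.val h12

lemma coeff_ne_zero (Δ : MultiFan n d) {x : Fin n → ℝ} (hx : Δ.Generic x)
    {a : Finset (Fin d) → Fin d → ℝ}
    (ha : ∀ I ∈ Δ.S, I.card = n → x = ∑ i ∈ I, a I i • Δ.v i)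
    {I : Finset (Fin d)} (hI : I ∈ Δ.S) (hcard : I.card = n) :
    ∀ i ∈ I, a I i ≠ 0 := by
  intro i hi h0
  have hne : I.Nonempty := ⟨i, hi⟩
  have hpos : 1 ≤ n := hcard ▸ Finset.card_pos.2 hne
  have herase : I.erase i ∈ Δ.S := Δ.downClosed I hI _ (Finset.erase_subset i I)
  refine hx (I.erase i) herase (Finset.empty_subset _)
    (by rw [Finset.card_erase_of_mem hi, hcard]; omega) ?_
  have : x = ∑ j ∈ I.erase i, a I j • Δ.v j := by
    rw [ha I hI hcard, ← Finset.add_sum_erase I _ hi, h0, zero_smul, zero_add]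
  rw [this]
  exact Δ.sum_rep_mem_span _ _

lemma inProjCone_iff (Δ : MultiFan n d) (x : Fin n → ℝ)
    {a : Finset (Fin d) → Fin d → ℝ}
    (ha : ∀ I ∈ Δ.S, I.card = n → x = ∑ i ∈ I, a I i • Δ.v i)
    {K I : Finset (Fin d)} (hI : I ∈ Δ.S) (hcard : I.card = n) (hKI : K ⊆ I) :
    Δ.InProjCone K I x ↔ ∀ j ∈ I \ K, 0 ≤ a I j := by
  constructor
  · rintro ⟨c, hc0, hcs⟩ j hj
    obtain ⟨e, he⟩ := Δ.rep_of_mem_span hI hKI hcs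
    have hx2 : x = ∑ i ∈ I, (if i ∈ K then e i else c i) • Δ.v i := by
      have h1 : x = ∑ k ∈ K, e k • Δ.v k + ∑ j ∈ I \ K, c j • Δ.v j := by
        rw [← he]; abel
      have hsplit : ∑ i ∈ I, (if i ∈ K then e i else c i) • Δ.v i
          = ∑ k ∈ K, e k • Δ.v k + ∑ j ∈ I \ K, c j • Δ.v j := by
        rw [← Finset.sum_sdiff hKI, add_comm]
        congr 1
        · exact Finset.sum_congr rfl (fun i hi => by rw [if_pos hi])
        · exact Finset.sum_congr rfl (fun i hi => by rw [if_neg (Finset.mem_sdiff.1 hi).2])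
      rw [h1, hsplit]
    have hcongr : ∀ i ∈ I, a I i = (if i ∈ K then e i else c i) := by
      apply Δ.coeff_unique hI
      rw [← ha I hI hcard, ← hx2]
    have hjI := Finset.mem_sdiff.1 hj
    have := hcongr j hjI.1
    rw [if_neg hjI.2] at this
    rw [this]
    exact hc0 j hj
  · intro h
    refine ⟨a I, h, ?_⟩
    have hsplit : x - ∑ j ∈ I \ K, a I j • Δ.v j = ∑ k ∈ K, a I k • Δ.v k := by
      rw [ha I hI hcard, ← Finset.sum_sdiff hKI]
      abel
    rw [hsplit]
    exact Δ.sum_rep_mem_span _ _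

lemma dv_formula (Δ : MultiFan n d) {x : Fin n → ℝ}
    {a : Finset (Fin d) → Fin d → ℝ}
    (ha : ∀ I ∈ Δ.S, I.card = n → x = ∑ i ∈ I, a I i • Δ.v i)
    (K : Finset (Fin d)) :
    Δ.dv K x = ∑ I ∈ Δ.S.filter
      (fun I => I.card = n ∧ K ⊆ I ∧ (I.filter fun i => a I i < 0) ⊆ K), Δ.w I := by
  unfold dv
  apply Finset.sum_congr _ (fun _ _ => rfl)
  apply Finset.filter_congr
  intro I hI
  constructor
  · rintro ⟨h1, h2, h3⟩
    refine ⟨h1, h2, ?_⟩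
    have h4 := (Δ.inProjCone_iff x ha hI h1 h2).1 h3
    intro i hi
    rcases Finset.mem_filter.1 hi with ⟨hiI, hneg⟩
    by_contra hiK
    exact absurd (h4 i (Finset.mem_sdiff.2 ⟨hiI, hiK⟩)) (by linarith)
  · rintro ⟨h1, h2, h3⟩
    refine ⟨h1, h2, (Δ.inProjCone_iff x ha hI h1 h2).2 ?_⟩
    intro j hj
    rcases Finset.mem_sdiff.1 hj with ⟨hjI, hjK⟩
    by_contra hneg
    exact hjK (h3 (Finset.mem_filter.2 ⟨hjI, by linarith⟩))

end MultiFan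

/-- number of `K` with `A ⊆ K ⊆ B`, `|K| = j`, as a function of cardinalities -/
lemma count_between {α : Type*} [DecidableEq α] (A B : Finset α) (hAB : A ⊆ B) (j : ℕ) :
    (B.powerset.filter fun K => A ⊆ K ∧ K.card = j).card =
      if A.card ≤ j then (B.card - A.card).choose (j - A.card) else 0 := by
  split_ifs with h
  · rw [← Finset.card_sdiff_of_subset hAB, ← Finset.card_powersetCard]
    apply Finset.card_bij' (fun K _ => K \ A) (fun K' _ => K' ∪ A)
    · intro K hK
      rcases Finset.mem_filter.1 hK with ⟨hKB, hAK, hKj⟩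
      rw [Finset.mem_powerset] at hKB
      rw [Finset.mem_powersetCard]
      exact ⟨Finset.sdiff_subset_sdiff hKB (le_refl A), by
        rw [Finset.card_sdiff_of_subset hAK, hKj]⟩
    · intro K' hK'
      rcases Finset.mem_powersetCard.1 hK' with ⟨hsub, hcard⟩
      have hdisj : Disjoint K' A := Finset.disjoint_left.2
        (fun x hx => (Finset.mem_sdiff.1 (hsub hx)).2)
      refine Finset.mem_filter.2 ⟨Finset.mem_powerset.2 ?_, Finset.subset_union_right, ?_⟩
      · exact Finset.union_subset (hsub.trans Finset.sdiff_subset) hAB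
      · rw [Finset.card_union_of_disjoint hdisj, hcard]
        omega
    · intro K hK
      rcases Finset.mem_filter.1 hK with ⟨_, hAK, _⟩
      exact Finset.sdiff_union_of_subset hAK
    · intro K' hK'
      rcases Finset.mem_powersetCard.1 hK' with ⟨hsub, _⟩
      have hdisj : Disjoint K' A := Finset.disjoint_left.2
        (fun x hx => (Finset.mem_sdiff.1 (hsub hx)).2)
      exact Finset.union_sdiff_cancel_right hdisj
  · rw [Finset.card_eq_zero]
    apply Finset.filter_false_of_mem
    rintro K _ ⟨hAK, hKj⟩
    exact h (hKj ▸ Finset.card_le_card hAK)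

open scoped Classical in
/-- the double-counting identity -/
lemma key_identity {n d : ℕ} (Δ : MultiFan n d) {x : Fin n → ℝ} (hx : Δ.Generic x)
    {a : Finset (Fin d) → Fin d → ℝ}
    (ha : ∀ I ∈ Δ.S, I.card = n → x = ∑ i ∈ I, a I i • Δ.v i) (j : ℕ) :
    ∑ K ∈ Δ.S.filter (fun K => K.card = j), Δ.dv K x
      = ∑ m ∈ Finset.range (n+1),
          ((if m ≤ j then (n - m).choose (j - m) else 0 : ℕ) : ℤ) *
            ∑ I ∈ Δ.S.filter
              (fun I => I.card = n ∧ (I.filter fun i => a I i < 0).card = m), Δ.w I := by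
  have step1 : ∑ K ∈ Δ.S.filter (fun K => K.card = j), Δ.dv K x
      = ∑ K ∈ Δ.S.filter (fun K => K.card = j),
          ∑ I ∈ Δ.S.filter (fun I => I.card = n),
            (if K ⊆ I ∧ (I.filter fun i => a I i < 0) ⊆ K then Δ.w I else 0) := by
    apply Finset.sum_congr rfl
    intro K _
    rw [Δ.dv_formula ha K, ← Finset.sum_filter, Finset.filter_filter]
  rw [step1, Finset.sum_comm]
  have step2 : ∀ I ∈ Δ.S.filter (fun I => I.card = n),
      ∑ K ∈ Δ.S.filter (fun K => K.card = j),
          (if K ⊆ I ∧ (I.filter fun i => a I i < 0) ⊆ K then Δ.w I else 0)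
        = ((if (I.filter fun i => a I i < 0).card ≤ j
              then (n - (I.filter fun i => a I i < 0).card).choose
                     (j - (I.filter fun i => a I i < 0).card) else 0 : ℕ) : ℤ) * Δ.w I := by
    intro I hI
    rcases Finset.mem_filter.1 hI with ⟨hIS, hIcard⟩
    rw [← Finset.sum_filter, Finset.filter_filter, Finset.sum_const]
    have hset : (Δ.S.filter fun K => K.card = j ∧ K ⊆ I ∧ (I.filter fun i => a I i < 0) ⊆ K)
        = I.powerset.filter (fun K => (I.filter fun i => a I i < 0) ⊆ K ∧ K.card = j) := by
      ext K
      simp only [Finset.mem_filter, Finset.mem_powerset]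
      constructor
      · rintro ⟨_, h1, h2, h3⟩; exact ⟨h2, h3, h1⟩
      · rintro ⟨h1, h2, h3⟩; exact ⟨Δ.downClosed I hIS K h1, h3, h1, h2⟩
    rw [hset, count_between _ _ (Finset.filter_subset _ _) j, hIcard]
    simp [nsmul_eq_mul, mul_comm]
  rw [Finset.sum_congr rfl step2]
  rw [← Finset.sum_fiberwise_of_maps_to
    (g := fun I => (I.filter fun i => a I i < 0).card)
    (t := Finset.range (n+1)) ?_ ]
  · apply Finset.sum_congr rfl
    intro m _
    rw [Finset.mul_sum, Finset.filter_filter]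
    apply Finset.sum_congr _ ?_
    · apply Finset.filter_congr; intros; tauto
    · intro I hI
      rcases Finset.mem_filter.1 hI with ⟨_, _, hm⟩
      rw [hm]
  · intro I hI
    rcases Finset.mem_filter.1 hI with ⟨_, hIcard⟩
    simp only [Finset.mem_range]
    have := Finset.card_le_card (Finset.filter_subset (fun i => a I i < 0) I)
    omega

end Aux

/-- The numbers `h_q(Δ) = ∑_{μ(I)=q} w(I)` of a complete simplicial multi-fan are
independent of the choice of the generic vector used to define `μ`. -/
theorem stmt1 (n d : ℕ) (Δ : MultiFan n d) (hC : Δ.Complete)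
    (x y : Fin n → ℝ) (hx : Δ.Generic x) (hy : Δ.Generic y)
    (a b : Finset (Fin d) → Fin d → ℝ)
    (ha : ∀ I ∈ Δ.S, I.card = n → x = ∑ i ∈ I, a I i • Δ.v i)
    (hb : ∀ I ∈ Δ.S, I.card = n → y = ∑ i ∈ I, b I i • Δ.v i) :
    ∀ q : ℕ,
      ∑ I ∈ Δ.S.filter (fun I => I.card = n ∧
          (I.filter fun i => 0 < a I i).card = q), Δ.w I
    = ∑ I ∈ Δ.S.filter (fun I => I.card = n ∧
          (I.filter fun i => 0 < b I i).card = q), Δ.w I := by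
  classical
  intro q
  by_cases hq : q ≤ n
  · -- translate positive-count to negative-count
    have hposneg : ∀ (z : Fin n → ℝ) (hz : Δ.Generic z)
        (c : Finset (Fin d) → Fin d → ℝ)
        (hc : ∀ I ∈ Δ.S, I.card = n → z = ∑ i ∈ I, c I i • Δ.v i),
        Δ.S.filter (fun I => I.card = n ∧ (I.filter fun i => 0 < c I i).card = q)
          = Δ.S.filter (fun I => I.card = n ∧ (I.filter fun i => c I i < 0).card = n - q) := by
      intro z hz c hc
      apply Finset.filter_congr
      intro I hI
      constructor <;> rintro ⟨h1, h2⟩ <;> refine ⟨h1, ?_⟩ <;>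
      · have hnz := Δ.coeff_ne_zero hz hc hI h1
        have hfil : I.filter (fun i => ¬ 0 < c I i) = I.filter (fun i => c I i < 0) := by
          apply Finset.filter_congr
          intro i hi
          have := hnz i hi
          constructor <;> intro h
          · rcases lt_or_gt_of_ne this with h' | h'
            · exact h'
            · exact absurd h' h
          · linarith
        have hsum := Finset.card_filter_add_card_filter_not
          (s := I) (p := fun i => 0 < c I i)
        rw [hfil, h1] at hsum
        omega
    rw [hposneg x hx a ha, hposneg y hy b hb]
    -- now prove the negative-count sums agree, by strong induction via the key identity
    have hGF : ∀ (z : Fin n → ℝ), Δ.Generic z → ∀ K, Δ.GenericFor K z := by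
      intro z hz K L hL _ h2
      exact hz L hL (Finset.empty_subset L) h2
    have hdv : ∀ K ∈ Δ.S, Δ.dv K x = Δ.dv K y := by
      intro K hK
      exact (hC K hK).2 x y (hGF x hx K) (hGF y hy K)
    have hkey : ∀ j : ℕ,
        ∑ m ∈ Finset.range (n+1),
          ((if m ≤ j then (n - m).choose (j - m) else 0 : ℕ) : ℤ) *
            ∑ I ∈ Δ.S.filter
              (fun I => I.card = n ∧ (I.filter fun i => a I i < 0).card = m), Δ.w I
      = ∑ m ∈ Finset.range (n+1),
          ((if m ≤ j then (n - m).choose (j - m) else 0 : ℕ) : ℤ) *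
            ∑ I ∈ Δ.S.filter
              (fun I => I.card = n ∧ (I.filter fun i => b I i < 0).card = m), Δ.w I := by
      intro j
      rw [← key_identity Δ hx ha j, ← key_identity Δ hy hb j]
      exact Finset.sum_congr rfl (fun K hK => hdv K (Finset.mem_filter.1 hK).1)
    have main : ∀ j : ℕ, j ≤ n →
        ∑ I ∈ Δ.S.filter
            (fun I => I.card = n ∧ (I.filter fun i => a I i < 0).card = j), Δ.w I
      = ∑ I ∈ Δ.S.filter
            (fun I => I.card = n ∧ (I.filter fun i => b I i < 0).card = j), Δ.w I := by
      intro j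
      induction j using Nat.strong_induction_on with
      | _ j IH =>
        intro hj
        have h := hkey j
        have h' : ∑ m ∈ Finset.range (n+1),
            ((if m ≤ j then (n - m).choose (j - m) else 0 : ℕ) : ℤ) *
              ((∑ I ∈ Δ.S.filter
                (fun I => I.card = n ∧ (I.filter fun i => a I i < 0).card = m), Δ.w I)
              - (∑ I ∈ Δ.S.filter
                (fun I => I.card = n ∧ (I.filter fun i => b I i < 0).card = m), Δ.w I)) = 0 := by
          simp only [mul_sub, Finset.sum_sub_distrib, h, sub_self]
        rw [Finset.sum_eq_single j ?_ ?_] at h'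
        · rw [if_pos (le_refl j), Nat.sub_self, Nat.choose_zero_right] at h'
          simp only [Nat.cast_one, one_mul, sub_eq_zero] at h'
          exact h'
        · intro m hm hmj
          rcases lt_or_gt_of_ne hmj with h1 | h1
          · rw [IH m h1 (by omega), sub_self, mul_zero]
          · rw [if_neg (by omega), Nat.cast_zero, zero_mul]
        · intro hj'
          exact absurd (Finset.mem_range.2 (by omega)) hj'
    exact main (n - q) (by omega)
  · -- q > n : both sides are empty sums
    have hempty : ∀ (c : Finset (Fin d) → Fin d → ℝ),
        Δ.S.filter (fun I => I.card = n ∧ (I.filter fun i => 0 < c I i).card = q)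
          = ∅ := by
      intro c
      apply Finset.filter_false_of_mem
      rintro I _ ⟨h1, h2⟩
      have := Finset.card_le_card (Finset.filter_subset (fun i => 0 < c I i) I)
      omega
    rw [hempty a, hempty b]
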